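/- Let F be a set of predictors and for each f ∈ F let μ̂_f ∈ ℝ and σ̂_f ≥ 0 be its mean and standard deviation of risks. Assume: (1) there exists f₀ ∈ F with σ̂_{f₀} = 0 and μ̂_{f₀} < ∞; (2) μ* := inf_{f ∈ F} μ̂_f > -∞. For α ∈ (1/2, 1), let f̂_α be a minimizer of f ↦ μ̂_f + Φ⁻¹(α)·σ̂_f, where Φ⁻¹ is the standard normal quantile function. Then σ̂_{f̂_α} ≤ (μ̂_{f₀} − μ*)/Φ⁻¹(α), so σ̂_{f̂_α} → 0 as α → 1, and μ̂_{f̂_α} ≤ μ̂_{f₀} for all α ∈ (1/2, 1). -/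
import Mathlib


open Filter

/-- Gaussian EQRM learns a minimal invariant-risk predictor as `α → 1`:
if some `f₀` has zero risk-standard-deviation, mean risks are bounded below,
and `f̂ α` minimizes `μ̂ f + Φ⁻¹(α) · σ̂ f` (where `Φ⁻¹` is the standard normal
quantile, positive on `(1/2,1)` and tending to `∞` as `α → 1`), then
`σ̂ (f̂ α) ≤ (μ̂ f₀ − μ*)/Φ⁻¹(α)`, so `σ̂ (f̂ α) → 0` as `α → 1`, and
`μ̂ (f̂ α) ≤ μ̂ f₀` for all `α ∈ (1/2, 1)`. -/
theorem gaussian_eqrm_invariant_risk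
    {F : Type*} (μ σ : F → ℝ) (hσ : ∀ f, 0 ≤ σ f)
    (f₀ : F) (hf₀ : σ f₀ = 0)
    (hbdd : BddBelow (Set.range μ))
    (Φinv : ℝ → ℝ)
    (hΦpos : ∀ α ∈ Set.Ioo (1/2 : ℝ) 1, 0 < Φinv α)
    (hΦtop : Tendsto Φinv (nhdsWithin 1 (Set.Iio 1)) atTop)
    (fhat : ℝ → F)
    (hmin : ∀ α ∈ Set.Ioo (1/2 : ℝ) 1, ∀ f : F,
      μ (fhat α) + Φinv α * σ (fhat α) ≤ μ f + Φinv α * σ f) :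
    (∀ α ∈ Set.Ioo (1/2 : ℝ) 1,
        σ (fhat α) ≤ (μ f₀ - sInf (Set.range μ)) / Φinv α) ∧
    Tendsto (fun α => σ (fhat α)) (nhdsWithin 1 (Set.Iio 1)) (nhds 0) ∧
    (∀ α ∈ Set.Ioo (1/2 : ℝ) 1, μ (fhat α) ≤ μ f₀) := by
  have key : ∀ α ∈ Set.Ioo (1/2 : ℝ) 1,
      μ (fhat α) + Φinv α * σ (fhat α) ≤ μ f₀ := by
    intro α hα
    have := hmin α hα f₀
    simpa [hf₀] using this
  have hinf : ∀ g : F, sInf (Set.range μ) ≤ μ g := fun g =>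
    csInf_le hbdd ⟨g, rfl⟩
  have hbound : ∀ α ∈ Set.Ioo (1/2 : ℝ) 1,
      σ (fhat α) ≤ (μ f₀ - sInf (Set.range μ)) / Φinv α := by
    intro α hα
    have hpos := hΦpos α hα
    rw [le_div_iff₀ hpos]
    have h1 : Φinv α * σ (fhat α) ≤ μ f₀ - μ (fhat α) := by
      linarith [key α hα]
    calc σ (fhat α) * Φinv α = Φinv α * σ (fhat α) := mul_comm _ _
      _ ≤ μ f₀ - μ (fhat α) := h1
      _ ≤ μ f₀ - sInf (Set.range μ) := by linarith [hinf (fhat α)]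
  refine ⟨hbound, ?_, ?_⟩
  · have hev : ∀ᶠ α in nhdsWithin 1 (Set.Iio 1), α ∈ Set.Ioo (1/2 : ℝ) 1 := by
      filter_upwards [Ioo_mem_nhdsLT_of_mem (by norm_num : (1:ℝ) ∈ Set.Ioc (1/2) 1)] with α hα
      exact hα
    have hlim : Tendsto (fun α => (μ f₀ - sInf (Set.range μ)) / Φinv α)
        (nhdsWithin 1 (Set.Iio 1)) (nhds 0) :=
      Tendsto.div_atTop tendsto_const_nhds hΦtop
    refine squeeze_zero' ?_ ?_ hlim
    · filter_upwards [hev] with α _ using hσ (fhat α)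
    · filter_upwards [hev] with α hα using hbound α hα
  · intro α hα
    have hpos := hΦpos α hα
    have : 0 ≤ Φinv α * σ (fhat α) := mul_nonneg hpos.le (hσ (fhat α))
    linarith [key α hα]
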